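/- If an R-module M has Krull dimension, then M has finite uniform dimension. -/

import Mathlib

universe u v

section Defs
variable (R : Type u) [Ring R]

/-- A submodule `S` is small (superfluous) in `M`. -/
def IsSmall {M : Type v} [AddCommGroup M] [Module R M] (S : Submodule R M) : Prop :=
  ∀ K : Submodule R M, S ⊔ K = ⊤ → K = ⊤

/-- The radical: sum of all small submodules. -/
def Rad (M : Type v) [AddCommGroup M] [Module R M] : Submodule R M :=
  sSup {S : Submodule R M | IsSmall R S}

/-- AB5*: the lattice of submodules distributes joins over inverse systems. -/
def AB5Star (M : Type v) [AddCommGroup M] [Module R M] : Prop :=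
  ∀ (N : Submodule R M) (s : Set (Submodule R M)), s.Nonempty → DirectedOn (· ≥ ·) s →
    N ⊔ sInf s = ⨅ m ∈ s, (N ⊔ m)

/-- A family of submodules is coindependent. -/
def Coindependent {M : Type v} [AddCommGroup M] [Module R M] {ι : Type w}
    (N : ι → Submodule R M) : Prop :=
  ∀ l : ι, ∀ J : Finset ι, l ∉ J → N l ⊔ (⨅ j ∈ J, N j) = ⊤

/-- A family of submodules is completely coindependent. -/
def CompletelyCoindependent {M : Type v} [AddCommGroup M] [Module R M] {ι : Type w}
    (N : ι → Submodule R M) : Prop :=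
  ∀ l : ι, N l ⊔ (⨅ (μ) (_ : μ ≠ l), N μ) = ⊤

/-- A set of submodules is coindependent. -/
def CoindepSet {M : Type v} [AddCommGroup M] [Module R M] (S : Set (Submodule R M)) : Prop :=
  ∀ N ∈ S, ∀ J : Finset (Submodule R M), ↑J ⊆ S \ {N} → N ⊔ (⨅ P ∈ J, P) = ⊤

/-- `M` has finite hollow dimension iff every coindependent family of proper submodules is finite. -/
def FinHollowDim (M : Type v) [AddCommGroup M] [Module R M] : Prop :=
  ∀ S : Set (Submodule R M), (∀ N ∈ S, N ≠ ⊤) → CoindepSet R S → S.Finite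

/-- `M` has finite uniform dimension iff it has no infinite independent family of
nonzero submodules. -/
def FinUniformDim (M : Type v) [AddCommGroup M] [Module R M] : Prop :=
  ∀ S : Set (Submodule R M), (∀ N ∈ S, N ≠ ⊥) → sSupIndep S → S.Finite

/-- `L` lies above `N` in `M`: any `K` with `L + K = M` satisfies `N + K = M`
(equivalently, `L/N` is small in `M/N`). -/
def LiesAbove {M : Type v} [AddCommGroup M] [Module R M] (L N : Submodule R M) : Prop :=
  ∀ K : Submodule R M, L ⊔ K = ⊤ → N ⊔ K = ⊤

end Defs

/-- Deviation of the interval `[b, a]` of a preorder is `≤ o` (Gabriel–Rentschler).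
The empty deviation (`-1`/`-∞`) corresponds to intervals where chains are constant. -/
def DevLE {L : Type u} [Preorder L] (o : Ordinal.{u}) (a b : L) : Prop :=
  ∀ f : ℕ → L, Antitone f → f 0 ≤ a → (∀ i, b ≤ f i) →
    {i : ℕ | ¬ f i ≤ f (i + 1) ∧
      ¬ ∃ o' : {x : Ordinal.{u} // x < o}, DevLE o'.1 (f i) (f (i + 1))}.Finite
termination_by o
decreasing_by exact o'.2

lemma devle_key {R : Type u} [Ring R] {M : Type v} [AddCommGroup M] [Module R M]
    (N : ℕ → Submodule R M) (hind : iSupIndep N) (hne : ∀ i, N i ≠ ⊥) :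
    ∀ o : Ordinal.{v}, ∀ B T : Set ℕ, T.Infinite → Disjoint B T →
      ¬ DevLE o (⨆ i ∈ B ∪ T, N i) (⨆ i ∈ B, N i) := by
  intro o
  induction o using Ordinal.induction with
  | h o IH =>
  intro B T hT hBT hdev
  rw [DevLE] at hdev
  obtain ⟨e⟩ : Nonempty (ℕ ↪ T) := ⟨hT.natEmbedding⟩
  set g : ℕ → ℕ := fun k => ((e k : T) : ℕ) with hg_def
  have hg : Function.Injective g := fun a b h => e.injective (Subtype.ext h)
  have hgT : ∀ k, g k ∈ T := fun k => (e k).2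
  set Tn : ℕ → Set ℕ := fun n => g '' {k | 2 ^ n ∣ k} with hTn_def
  have hTn_anti : Antitone Tn := fun m n hmn =>
    Set.image_mono (fun k hk => dvd_trans (pow_dvd_pow 2 hmn) hk)
  have hTn_sub : ∀ n, Tn n ⊆ T := fun n m ⟨k, _, hk⟩ => hk ▸ hgT k
  set f : ℕ → Submodule R M := fun n => ⨆ i ∈ B ∪ Tn n, N i with hf_def
  have hanti : Antitone f := fun m n hmn =>
    biSup_mono (Set.union_subset_union_right B (hTn_anti hmn))
  have hf0 : f 0 ≤ ⨆ i ∈ B ∪ T, N i :=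
    biSup_mono (Set.union_subset_union_right B (hTn_sub 0))
  have hfb : ∀ n, (⨆ i ∈ B, N i) ≤ f n := fun n =>
    biSup_mono Set.subset_union_left
  -- an element of Tn n \ Tn (n+1) is not in B ∪ Tn (n+1)
  have hnm : ∀ n k, 2 ^ n ∣ k → ¬ 2 ^ (n + 1) ∣ k → g k ∉ B ∪ Tn (n + 1) := by
    intro n k hdvd hndvd hmem
    rcases hmem with hB | ⟨j, hj, hgj⟩
    · exact hBT.ne_of_mem hB (hgT k) rfl
    · exact hndvd (hg hgj ▸ hj)
  have hnot : ∀ n, ¬ f n ≤ f (n + 1) := by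
    intro n hle
    have hmem : g (2 ^ n) ∈ B ∪ Tn n := Or.inr ⟨2 ^ n, dvd_refl _, rfl⟩
    have h1 : N (g (2 ^ n)) ≤ f n := le_biSup _ hmem
    have hnd : ¬ 2 ^ (n + 1) ∣ 2 ^ n := by
      intro hd
      have h2 := Nat.le_of_dvd (Nat.pow_pos (by norm_num)) hd
      have h3 : (2 : ℕ) ^ n < 2 ^ (n + 1) := Nat.pow_lt_pow_right (by norm_num) n.lt_succ_self
      omega
    have hd : Disjoint (N (g (2 ^ n))) (f (n + 1)) :=
      hind.disjoint_biSup (hnm n (2 ^ n) (dvd_refl _) hnd)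
    exact hne _ (hd.eq_bot_of_le (h1.trans hle))
  have hfin := hdev f hanti hf0 hfb
  have hex : ∃ n, ∃ o' : {x : Ordinal.{v} // x < o}, DevLE o'.1 (f n) (f (n + 1)) := by
    by_contra hc
    push_neg at hc
    have huniv : {i : ℕ | ¬ f i ≤ f (i + 1) ∧
        ¬ ∃ o' : {x : Ordinal.{v} // x < o}, DevLE o'.1 (f i) (f (i + 1))} = Set.univ :=
      Set.eq_univ_of_forall fun n => ⟨hnot n, not_exists.mpr (hc n)⟩
    rw [huniv] at hfin
    exact Set.infinite_univ hfin
  obtain ⟨n, o', hdev'⟩ := hex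
  have hinf : (Tn n \ Tn (n + 1)).Infinite := by
    apply Set.infinite_of_injective_forall_mem (f := fun k : ℕ => g (2 ^ n * (2 * k + 1)))
    · intro a b h
      have h2 := hg h
      have hp : 0 < (2 : ℕ) ^ n := Nat.pow_pos (by norm_num)
      have h3 := Nat.eq_of_mul_eq_mul_left hp h2
      omega
    · intro k
      constructor
      · exact ⟨2 ^ n * (2 * k + 1), dvd_mul_right _ _, rfl⟩
      · rintro ⟨j, hj, hgj⟩
        have hjj := hg hgj
        subst hjj
        simp only [Set.mem_setOf_eq, pow_succ] at hj
        have hpos : 0 < (2 : ℕ) ^ n := Nat.pow_pos (by norm_num)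
        have h2 : (2 : ℕ) ∣ 2 * k + 1 := (Nat.mul_dvd_mul_iff_left hpos).mp hj
        omega
  have hdisj : Disjoint (B ∪ Tn (n + 1)) (Tn n \ Tn (n + 1)) := by
    rw [Set.disjoint_union_left]
    exact ⟨hBT.mono_right ((Set.diff_subset).trans (hTn_sub n)), Set.disjoint_sdiff_right⟩
  have hset : (B ∪ Tn (n + 1)) ∪ (Tn n \ Tn (n + 1)) = B ∪ Tn n := by
    have hsub : Tn (n + 1) ⊆ Tn n := hTn_anti n.le_succ
    ext x
    simp only [Set.mem_union, Set.mem_diff]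
    constructor
    · rintro ((h | h) | ⟨h, _⟩)
      · exact Or.inl h
      · exact Or.inr (hsub h)
      · exact Or.inr h
    · rintro (h | h)
      · exact Or.inl (Or.inl h)
      · by_cases hx : x ∈ Tn (n + 1)
        · exact Or.inl (Or.inr hx)
        · exact Or.inr ⟨h, hx⟩
  have := IH o'.1 o'.2 (B ∪ Tn (n + 1)) (Tn n \ Tn (n + 1)) hinf hdisj
  rw [hset] at this
  exact this hdev'

/-- `M` has Krull dimension: the deviation of its submodule lattice exists. -/
def HasKrullDim (R : Type u) (M : Type v) [Ring R] [AddCommGroup M] [Module R M] : Prop :=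
  ∃ o : Ordinal.{v}, DevLE o (⊤ : Submodule R M) (⊥ : Submodule R M)

/-- The hollow dimension of `M` as a cardinal. -/
noncomputable def hollowDim (R : Type u) (M : Type v) [Ring R] [AddCommGroup M] [Module R M] :
    Cardinal :=
  ⨆ S : {S : Set (Submodule R M) // (∀ N ∈ S, N ≠ ⊤) ∧ CoindepSet R S}, Cardinal.mk S.1

theorem stmt10 {R : Type u} [Ring R] {M : Type v} [AddCommGroup M] [Module R M]
    (h : HasKrullDim R M) : FinUniformDim R M := by
  obtain ⟨o, ho⟩ := h
  intro S hS hind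
  by_contra hfin
  have hT : S.Infinite := hfin
  let g : ℕ ↪ S := hT.natEmbedding
  set N : ℕ → Submodule R M := fun i => ((g i : S) : Submodule R M) with hN_def
  have hindN : iSupIndep N := ((sSupIndep_iff S).mp hind).comp g.injective
  have hne : ∀ i, N i ≠ ⊥ := fun i => hS _ (g i).2
  apply devle_key N hindN hne o ∅ Set.univ Set.infinite_univ (Set.disjoint_left.mpr fun a h => h.elim)
  rw [DevLE]
  intro f hf h0 hb
  rw [DevLE] at ho
  exact ho f hf le_top fun i => bot_le
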